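/- Let k ≥ 1 be an integer and a_1, …, a_k ∈ ℝ. The family of positive reals exp(a_1 b_1 + a_2 b_2 + ⋯ + a_k b_k), indexed by all integer tuples (b_1, …, b_k) with 1 ≤ b_1 < b_2 < ⋯ < b_k, is summable if and only if every tail sum is negative, i.e. a_k < 0, a_{k−1} + a_k < 0, …, and a_1 + a_2 + ⋯ + a_k < 0. -/

import Mathlib

open scoped ENNReal

open Finset in
/-- tsum over a finite pi type of a product of single-variable functions. -/
lemma tsum_pi_prod : ∀ (n : ℕ) (g : Fin n → ℕ → ENNReal),
    ∑' c : Fin n → ℕ, ∏ i, g i (c i) = ∏ i, ∑' m : ℕ, g i m := by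
  intro n
  induction n with
  | zero =>
      intro g
      simp only [Finset.univ_eq_empty, Finset.prod_empty]
      exact tsum_eq_single (fun i => i.elim0) (fun b hb => absurd (funext fun i => i.elim0) hb)
  | succ n ih =>
      intro g
      rw [← (Fin.consEquiv (fun _ : Fin (n+1) => ℕ)).tsum_eq, ENNReal.tsum_prod', Fin.prod_univ_succ]
      have : ∀ (p : ℕ × (Fin n → ℕ)) ,
          (∏ i, g i ((Fin.consEquiv (fun _ : Fin (n+1) => ℕ)) p i)) =
            g 0 p.1 * ∏ i : Fin n, g i.succ (p.2 i) := by
        intro p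
        rw [Fin.prod_univ_succ]
        simp [Fin.consEquiv]
      simp only [this]
      rw [← ih (fun i m => g i.succ m)]
      simp only [ENNReal.tsum_mul_left, ENNReal.tsum_mul_right]

lemma summable_iff_ofReal_ne_top {α : Type*} (f : α → ℝ) (hf : ∀ a, 0 ≤ f a) :
    Summable f ↔ (∑' a, ENNReal.ofReal (f a)) ≠ ∞ := by
  have h1 : ∀ a, ENNReal.ofReal (f a) = ((f a).toNNReal : ENNReal) := fun a => rfl
  have h2 : (fun a => ((f a).toNNReal : ℝ)) = f := funext fun a => Real.coe_toNNReal _ (hf a)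
  rw [iff_comm]
  simp only [h1]
  rw [ENNReal.tsum_coe_ne_top_iff_summable_coe, h2]

/-- The family `exp(a₁b₁ + ⋯ + a_k b_k)`, indexed by the integer tuples
`1 ≤ b₁ < b₂ < ⋯ < b_k`, is summable iff all tail sums of the `aᵢ` are negative. -/
theorem stmt_0 (k : ℕ) (hk : 1 ≤ k) (a : Fin k → ℝ) :
    Summable (fun b : {f : Fin k → ℕ // StrictMono f ∧ ∀ i, 1 ≤ f i} =>
      Real.exp (∑ i, a i * (b.1 i : ℝ))) ↔
    ∀ i : Fin k, ∑ j ∈ Finset.Ici i, a j < 0 := by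
  classical
  set A : Fin k → ℝ := fun j => ∑ i ∈ Finset.Ici j, a i with hA
  -- the forward map
  set fwd : (Fin k → ℕ) → (Fin k → ℕ) := fun c i => ∑ j ∈ Finset.Iic i, (c j + 1) with hfwd
  have fwd_split : ∀ (c : Fin k → ℕ) (i : Fin k),
      fwd c i = (∑ j ∈ Finset.Iio i, (c j + 1)) + (c i + 1) := by
    intro c i
    show (∑ j ∈ Finset.Iic i, (c j + 1)) = _
    rw [← Finset.Iio_insert, Finset.sum_insert (Finset.notMem_Iio_self), add_comm]
  have fwd_mono : ∀ c, StrictMono (fwd c) := by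
    intro c i i' h
    exact Finset.sum_lt_sum_of_subset (Finset.Iic_subset_Iic.2 h.le)
      (Finset.mem_Iic.2 le_rfl) (by simpa using h.not_ge) (Nat.succ_pos _)
      (fun j _ _ => Nat.zero_le _)
  have fwd_ge : ∀ c i, 1 ≤ fwd c i := by
    intro c i
    calc 1 ≤ c i + 1 := Nat.le_add_left _ _
    _ ≤ _ := Finset.single_le_sum (f := fun j => c j + 1)
        (fun j _ => Nat.zero_le _) (Finset.mem_Iic.2 le_rfl)
  set F : (Fin k → ℕ) → {f : Fin k → ℕ // StrictMono f ∧ ∀ i, 1 ≤ f i} :=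
    fun c => ⟨fwd c, fwd_mono c, fwd_ge c⟩ with hF
  have Finj : Function.Injective F := by
    intro c c' h
    have h' : ∀ i, fwd c i = fwd c' i := fun i => congrFun (congrArg Subtype.val h) i
    funext i
    -- strong induction on i.val
    have key : ∀ n : ℕ, ∀ i : Fin k, (i : ℕ) ≤ n → c i = c' i := by
      intro n
      induction n with
      | zero =>
          intro i hi
          have hIio : Finset.Iio i = ∅ := by
            apply Finset.eq_empty_of_forall_notMem
            intro j hj
            have hv := Fin.lt_def.1 (Finset.mem_Iio.1 hj)
            omega
          have := h' i
          rw [fwd_split, fwd_split, hIio] at this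
          simpa using this
      | succ n ihn =>
          intro i hi
          have hsum : ∑ j ∈ Finset.Iio i, (c j + 1) = ∑ j ∈ Finset.Iio i, (c' j + 1) := by
            apply Finset.sum_congr rfl
            intro j hj
            have hji : (j : ℕ) < (i : ℕ) := Fin.lt_def.1 (Finset.mem_Iio.1 hj)
            rw [ihn j (by omega)]
          have := h' i
          rw [fwd_split, fwd_split, hsum] at this
          omega
    exact key (i : ℕ) i le_rfl
  have Fsurj : Function.Surjective F := by
    rintro ⟨f, hmono, hge⟩
    set c : Fin k → ℕ := fun i =>
      if h : (i : ℕ) = 0 then f i - 1 else f i - f ⟨(i : ℕ) - 1, by omega⟩ - 1 with hc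
    refine ⟨c, ?_⟩
    have key : ∀ n : ℕ, ∀ i : Fin k, (i : ℕ) ≤ n → fwd c i = f i := by
      intro n
      induction n with
      | zero =>
          intro i hi
          have hi0 : (i : ℕ) = 0 := by omega
          have hIio : Finset.Iio i = ∅ := by
            apply Finset.eq_empty_of_forall_notMem
            intro j hj
            have : (j : ℕ) < (i : ℕ) := Fin.lt_def.1 (Finset.mem_Iio.1 hj)
            omega
          rw [fwd_split, hIio]
          have h1 : 1 ≤ f i := hge i
          simp [hc, hi0]
          omega
      | succ n ihn =>
          intro i hi
          by_cases hi0 : (i : ℕ) = 0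
          · -- same as base case
            have hIio : Finset.Iio i = ∅ := by
              apply Finset.eq_empty_of_forall_notMem
              intro j hj
              have : (j : ℕ) < (i : ℕ) := Fin.lt_def.1 (Finset.mem_Iio.1 hj)
              omega
            rw [fwd_split, hIio]
            have h1 : 1 ≤ f i := hge i
            simp [hc, hi0]
            omega
          · set ip : Fin k := ⟨(i : ℕ) - 1, by omega⟩ with hip
            have hlt : ip < i := by
              rw [Fin.lt_def]; simp [hip]; omega
            have hIio : Finset.Iio i = Finset.Iic ip := by
              ext j
              simp only [Finset.mem_Iio, Finset.mem_Iic, Fin.lt_def, Fin.le_def, hip]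
              omega
            have hfip : fwd c ip = f ip := ihn ip (by simp [hip]; omega)
            have hflt : f ip < f i := hmono hlt
            rw [fwd_split, hIio]
            have : ∑ j ∈ Finset.Iic ip, (c j + 1) = f ip := hfip
            rw [this]
            have hci : c i = f i - f ip - 1 := by
              rw [hc]; simp only [dif_neg hi0]; rfl
            rw [hci]
            omega
    exact Subtype.ext (funext fun i => key (i : ℕ) i le_rfl)
  set E : (Fin k → ℕ) ≃ {f : Fin k → ℕ // StrictMono f ∧ ∀ i, 1 ≤ f i} :=
    Equiv.ofBijective F ⟨Finj, Fsurj⟩ with hE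
  rw [← E.summable_iff]
  have hcomp : (fun b : {f : Fin k → ℕ // StrictMono f ∧ ∀ i, 1 ≤ f i} =>
      Real.exp (∑ i, a i * (b.1 i : ℝ))) ∘ E
      = fun c : Fin k → ℕ => ∏ j, Real.exp (A j) ^ (c j + 1) := by
    funext c
    have hEc : (E c).1 = fwd c := rfl
    simp only [Function.comp_apply, hEc]
    have step1 : ∑ i, a i * ((fwd c i : ℕ) : ℝ)
        = ∑ i, ∑ j ∈ Finset.Iic i, a i * ((c j + 1 : ℕ) : ℝ) := by
      apply Finset.sum_congr rfl
      intro i _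
      rw [hfwd]
      push_cast
      rw [Finset.mul_sum]
    have step2 : ∑ i, ∑ j ∈ Finset.Iic i, a i * ((c j + 1 : ℕ) : ℝ)
        = ∑ j, ∑ i ∈ Finset.Ici j, a i * ((c j + 1 : ℕ) : ℝ) :=
      Finset.sum_comm' (fun x y => by
        simp only [Finset.mem_univ, true_and, Finset.mem_Iic, Finset.mem_Ici, and_true])
    have step3 : ∀ j : Fin k, ∑ i ∈ Finset.Ici j, a i * ((c j + 1 : ℕ) : ℝ)
        = ((c j + 1 : ℕ) : ℝ) * A j := by
      intro j
      rw [hA, ← Finset.sum_mul, mul_comm]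
    rw [step1, step2, Finset.sum_congr rfl (fun j _ => step3 j), Real.exp_sum]
    apply Finset.prod_congr rfl
    intro j _
    rw [Real.exp_nat_mul]
  rw [hcomp]
  -- now reduce to ENNReal computation
  have hnonneg : ∀ c : Fin k → ℕ, 0 ≤ ∏ j, Real.exp (A j) ^ (c j + 1) :=
    fun c => Finset.prod_nonneg fun j _ => pow_nonneg (Real.exp_nonneg _) _
  rw [summable_iff_ofReal_ne_top _ hnonneg]
  set Y : Fin k → ENNReal := fun j => ENNReal.ofReal (Real.exp (A j)) with hY
  have hYne0 : ∀ j, Y j ≠ 0 := fun j => by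
    simp [hY, ENNReal.ofReal_eq_zero, not_le, Real.exp_pos]
  have hYnetop : ∀ j, Y j ≠ ∞ := fun j => ENNReal.ofReal_ne_top
  have hofReal : ∀ c : Fin k → ℕ,
      ENNReal.ofReal (∏ j, Real.exp (A j) ^ (c j + 1)) = ∏ j, Y j ^ (c j + 1) := by
    intro c
    rw [ENNReal.ofReal_prod_of_nonneg (fun j _ => pow_nonneg (Real.exp_nonneg _) _)]
    exact Finset.prod_congr rfl fun j _ => ENNReal.ofReal_pow (Real.exp_nonneg _) _
  simp only [hofReal]
  rw [tsum_pi_prod k (fun j m => Y j ^ (m + 1))]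
  have hfactor : ∀ j : Fin k, (∑' m : ℕ, Y j ^ (m + 1)) = (1 - Y j)⁻¹ * Y j := by
    intro j
    simp only [pow_succ]
    rw [ENNReal.tsum_mul_right, ENNReal.tsum_geometric]
  simp only [hfactor]
  have hfac_top : ∀ j : Fin k, ((1 - Y j)⁻¹ * Y j = ∞ ↔ ¬ A j < 0) := by
    intro j
    rw [ENNReal.mul_eq_top]
    constructor
    · rintro (⟨h1, h2⟩ | ⟨h1, h2⟩)
      · exact absurd h2 (hYnetop j)
      · have : 1 - Y j = 0 := ENNReal.inv_eq_top.1 h1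
        have h1Y : 1 ≤ Y j := tsub_eq_zero_iff_le.1 this
        rw [hY] at h1Y
        rw [ENNReal.one_le_ofReal] at h1Y
        rw [not_lt]
        by_contra h
        push_neg at h
        have := Real.exp_lt_one_iff.2 h
        linarith
    · intro h
      rw [not_lt] at h
      have h1Y : 1 ≤ Y j := by
        rw [hY, ENNReal.one_le_ofReal]
        calc (1:ℝ) = Real.exp 0 := Real.exp_zero.symm
        _ ≤ Real.exp (A j) := Real.exp_le_exp.2 h
      right
      exact ⟨ENNReal.inv_eq_top.2 (tsub_eq_zero_iff_le.2 h1Y), hYne0 j⟩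
  constructor
  · intro hne j
    by_contra hj
    apply hne
    have hfj : (1 - Y j)⁻¹ * Y j = ∞ := (hfac_top j).2 hj
    have : ∏ i ∈ (Finset.univ : Finset (Fin k)), (1 - Y i)⁻¹ * Y i
        = ((1 - Y j)⁻¹ * Y j) * ∏ i ∈ Finset.univ.erase j, (1 - Y i)⁻¹ * Y i := by
      exact (Finset.mul_prod_erase Finset.univ (fun i => (1 - Y i)⁻¹ * Y i)
        (Finset.mem_univ j)).symm
    rw [this, hfj]
    rw [ENNReal.top_mul]
    rw [Finset.prod_ne_zero_iff]
    intro i _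
    exact mul_ne_zero (ENNReal.inv_ne_zero.2 (by
      exact ne_top_of_le_ne_top ENNReal.one_ne_top tsub_le_self)) (hYne0 i)
  · intro h
    apply ENNReal.prod_ne_top
    intro j _
    intro htop
    exact (hfac_top j).1 htop (h j)
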